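/- Let K be a field of characteristic zero, let σ_x, σ_y be the shift automorphisms of K[x,y] (x ↦ x+1, y ↦ y+1), and let p ∈ K[x,y] be an irreducible integer-linear polynomial of the form p = P(λx + μy) with P ∈ K[z], gcd(λ, μ) = 1, μ > 0, and p σ_y-normal (gcd(p, σ_y^ℓ(p)) = 1 in K(x)[y] for all nonzero integers ℓ). Let δ = σ_x^s σ_y^t where sλ + tμ = 1. Then the μ polynomials p, δ(p), δ^2(p), …, δ^{μ−1}(p) are mutually σ_y-inequivalent, i.e. no one of them is an associate of a σ_y-power shift of another. -/

import Mathlib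

open MvPolynomial

private lemma ringAut_zpow_shift {A : Type*} [CommRing A] (σ : RingAut A)
    (F : ℤ → A) (d : ℤ) (h : ∀ n, σ (F n) = F (n + d)) :
    ∀ (k n : ℤ), (σ ^ k) (F n) = F (n + k * d) := by
  have hinv : ∀ n, σ⁻¹ (F n) = F (n - d) := by
    intro n
    have h2 := h (n - d)
    rw [sub_add_cancel] at h2
    rw [← h2]
    exact σ.symm_apply_apply _
  intro k
  induction k using Int.induction_on with
  | zero => intro n; simp only [zero_mul, add_zero]; rfl
  | succ k ih =>
      intro n
      have hpow : σ ^ ((k : ℤ) + 1) = σ * σ ^ (k : ℤ) := by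
        rw [add_comm, zpow_add, zpow_one]
      rw [hpow]
      show σ ((σ ^ (k : ℤ)) (F n)) = F (n + ((k : ℤ) + 1) * d)
      rw [ih, h]
      ring_nf
  | pred k ih =>
      intro n
      have hpow : σ ^ (-(k : ℤ) - 1) = σ⁻¹ * σ ^ (-(k : ℤ)) := by
        rw [sub_eq_add_neg, add_comm, zpow_add, zpow_neg_one]
      rw [hpow]
      show σ⁻¹ ((σ ^ (-(k : ℤ))) (F n)) = F (n + (-(k : ℤ) - 1) * d)
      rw [ih, hinv]
      ring_nf

private lemma ringAut_aeval_comm {K A : Type*} [CommSemiring K] [CommSemiring A] [Algebra K A]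
    (σ : RingAut A) (hσ : ∀ c : K, σ (algebraMap K A c) = algebraMap K A c)
    (g : A) (P : Polynomial K) :
    σ (Polynomial.aeval g P) = Polynomial.aeval (σ g) P := by
  let τ : A ≃ₐ[K] A := { σ with commutes' := hσ }
  exact (Polynomial.aeval_algHom_apply τ.toAlgHom g P).symm

/-- The algebra isomorphism `K[x,y] ≃ (K[x])[y]` singling out the second variable. -/
noncomputable def yEquiv (K : Type*) [Field K] :
    MvPolynomial (Fin 2) K ≃ₐ[K] Polynomial (MvPolynomial (Fin 1) K) :=
  (renameEquiv K (Equiv.swap 0 1)).trans (finSuccEquiv K 1)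

private lemma natDegree_yEquiv {K : Type*} [Field K] (q : MvPolynomial (Fin 2) K) :
    (yEquiv K q).natDegree = degreeOf 1 q := by
  have h := degreeOf_rename_of_injective
    (f := ⇑(Equiv.swap (0 : Fin 2) 1)) (Equiv.injective _) (p := q) 1
  rw [Equiv.swap_apply_right] at h
  rw [yEquiv, AlgEquiv.trans_apply, renameEquiv_apply, natDegree_finSuccEquiv, h]

private lemma degreeOf_one_mul {K : Type*} [Field K] (a b : MvPolynomial (Fin 2) K)
    (ha : a ≠ 0) (hb : b ≠ 0) :
    degreeOf 1 (a * b) = degreeOf 1 a + degreeOf 1 b := by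
  have hEa : yEquiv K a ≠ 0 := fun h => ha ((yEquiv K).injective (h.trans (map_zero _).symm))
  have hEb : yEquiv K b ≠ 0 := fun h => hb ((yEquiv K).injective (h.trans (map_zero _).symm))
  rw [← natDegree_yEquiv, ← natDegree_yEquiv, ← natDegree_yEquiv, map_mul,
    Polynomial.natDegree_mul hEa hEb]

/-- For an irreducible integer-linear σ_y-normal polynomial `p = P(λx + μy)` with
`gcd(λ,μ) = 1`, `μ > 0`, and `δ = σ_x^s σ_y^t` with `sλ + tμ = 1`, the `μ`
polynomials `p, δ(p), …, δ^{μ−1}(p)` are mutually σ_y-inequivalent.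
σ_y-equivalence over `K(x)` of `a` and `b` is expressed as
`u·a = v·σ_y^ℓ(b)` for some nonzero `u, v` free of `y` (degree 0 in `y`). -/
theorem shift_classes_inequivalent (K : Type*) [Field K] [CharZero K]
    (σx σy : RingAut (MvPolynomial (Fin 2) K))
    (hxX : σx (X 0) = X 0 + 1) (hxY : σx (X 1) = X 1)
    (hxC : ∀ c : K, σx (C c) = C c)
    (hyX : σy (X 0) = X 0) (hyY : σy (X 1) = X 1 + 1)
    (hyC : ∀ c : K, σy (C c) = C c)
    (P : Polynomial K) (lam mu s t : ℤ)
    (hco : IsCoprime lam mu) (hmu : 0 < mu) (hst : s * lam + t * mu = 1)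
    (p : MvPolynomial (Fin 2) K)
    (hp : p = Polynomial.aeval (lam • X 0 + mu • X 1) P)
    (hirr : Irreducible p)
    (hnormal : ∀ ℓ : ℤ, ℓ ≠ 0 → ∀ d : MvPolynomial (Fin 2) K,
      d ∣ p → d ∣ (σy ^ ℓ) p → degreeOf 1 d = 0) :
    ∀ i j : ℤ, 0 ≤ i → i < mu → 0 ≤ j → j < mu → i ≠ j →
      ¬ ∃ (ℓ : ℤ) (u v : MvPolynomial (Fin 2) K), u ≠ 0 ∧ v ≠ 0 ∧
          degreeOf 1 u = 0 ∧ degreeOf 1 v = 0 ∧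
          u * ((σx ^ s * σy ^ t) ^ i) p = v * ((σy ^ ℓ) (((σx ^ s * σy ^ t) ^ j) p)) := by
  intro i j hi0 him hj0 hjm hij
  rintro ⟨ℓ, u, v, hu, hv, hdu, hdv, heq⟩
  set F : ℤ → MvPolynomial (Fin 2) K := fun n =>
    Polynomial.aeval (lam • X 0 + mu • X 1 + n • (1 : MvPolynomial (Fin 2) K)) P with hFdef
  -- shift actions on the family F
  have hyF : ∀ n : ℤ, σy (F n) = F (n + mu) := by
    intro n
    rw [hFdef]
    simp only
    rw [ringAut_aeval_comm σy (by simpa [MvPolynomial.algebraMap_eq] using hyC)]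
    congr 1
    simp only [zsmul_eq_mul, map_add, map_mul, map_intCast, map_one, hyX, hyY]
    push_cast
    ring
  have hxF : ∀ n : ℤ, σx (F n) = F (n + lam) := by
    intro n
    rw [hFdef]
    simp only
    rw [ringAut_aeval_comm σx (by simpa [MvPolynomial.algebraMap_eq] using hxC)]
    congr 1
    simp only [zsmul_eq_mul, map_add, map_mul, map_intCast, map_one, hxX, hxY]
    push_cast
    ring
  have hy := ringAut_zpow_shift σy F mu hyF
  have hx := ringAut_zpow_shift σx F lam hxF
  have hδF : ∀ n : ℤ, (σx ^ s * σy ^ t) (F n) = F (n + 1) := by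
    intro n
    show (σx ^ s) ((σy ^ t) (F n)) = F (n + 1)
    rw [hy t n, hx s]
    congr 1
    linarith [hst]
  have hδ := ringAut_zpow_shift (σx ^ s * σy ^ t) F 1 hδF
  have hpF : p = F 0 := by
    rw [hp, hFdef]
    simp
  have ha : ((σx ^ s * σy ^ t) ^ i) p = F i := by
    rw [hpF, hδ i 0]
    congr 1
    ring
  have hb : (σy ^ ℓ) (((σx ^ s * σy ^ t) ^ j) p) = F (j + ℓ * mu) := by
    rw [hpF, hδ j 0, hy ℓ]
    congr 1
    ring
  rw [ha, hb] at heq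
  -- irreducibility of the shifted polynomials
  have hirrA : Irreducible (F i) := ha ▸ (MulEquiv.irreducible_iff ((σx ^ s * σy ^ t) ^ i)).mpr hirr
  have hirrB : Irreducible (F (j + ℓ * mu)) :=
    hb ▸ (MulEquiv.irreducible_iff (σy ^ ℓ)).mpr
      ((MulEquiv.irreducible_iff ((σx ^ s * σy ^ t) ^ j)).mpr hirr)
  -- `P` is nonconstant
  have hmuK : ((mu : ℤ) : K) ≠ 0 := Int.cast_ne_zero.mpr hmu.ne'
  have hN : 1 ≤ P.natDegree := by
    by_contra hcon
    have h0 : P.natDegree = 0 := by omega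
    obtain ⟨e, hPe⟩ := Polynomial.natDegree_eq_zero.mp h0
    rw [← hPe, Polynomial.aeval_C, MvPolynomial.algebraMap_eq] at hp
    rcases eq_or_ne e 0 with rfl | he
    · rw [map_zero] at hp
      exact not_irreducible_zero (hp ▸ hirr)
    · exact hirr.not_isUnit (hp ▸ (isUnit_iff_exists_inv.mpr
        ⟨C e⁻¹, by rw [← map_mul, mul_inv_cancel₀ he, map_one]⟩))
  -- y-degree of each F n equals natDegree P
  have hdegF : ∀ n : ℤ, degreeOf 1 (F n) = P.natDegree := by
    intro n
    rw [← natDegree_yEquiv, hFdef]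
    simp only
    rw [← Polynomial.aeval_algHom_apply (yEquiv K) _ P]
    have e0 : (yEquiv K) (X 0) = Polynomial.C (X 0) := by
      rw [yEquiv, AlgEquiv.trans_apply, renameEquiv_apply, rename_X, Equiv.swap_apply_left]
      rw [show (1 : Fin 2) = (0 : Fin 1).succ from rfl, finSuccEquiv_X_succ]
    have e1 : (yEquiv K) (X 1) = Polynomial.X := by
      rw [yEquiv, AlgEquiv.trans_apply, renameEquiv_apply, rename_X, Equiv.swap_apply_right]
      exact finSuccEquiv_X_zero
    have hEg : (yEquiv K) (lam • X 0 + mu • X 1 + n • (1 : MvPolynomial (Fin 2) K))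
        = Polynomial.C ((mu : MvPolynomial (Fin 1) K)) * Polynomial.X
          + Polynomial.C ((lam : MvPolynomial (Fin 1) K) * X 0
              + (n : MvPolynomial (Fin 1) K)) := by
      simp only [zsmul_eq_mul, map_add, map_mul, map_intCast, map_one, e0, e1]
      push_cast
      ring
    rw [hEg]
    have hmuM : ((mu : ℤ) : MvPolynomial (Fin 1) K) ≠ 0 := by
      rw [show ((mu : ℤ) : MvPolynomial (Fin 1) K) = C ((mu : ℤ) : K) from
        (map_intCast (C : K →+* MvPolynomial (Fin 1) K) mu).symm]
      exact fun h => hmuK ((C_injective (Fin 1) K) (h.trans C_0.symm))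
    have hcomp : Polynomial.aeval
          (Polynomial.C ((mu : MvPolynomial (Fin 1) K)) * Polynomial.X
            + Polynomial.C ((lam : MvPolynomial (Fin 1) K) * X 0
                + (n : MvPolynomial (Fin 1) K))) P
        = (P.map (algebraMap K (MvPolynomial (Fin 1) K))).comp
            (Polynomial.C ((mu : MvPolynomial (Fin 1) K)) * Polynomial.X
              + Polynomial.C ((lam : MvPolynomial (Fin 1) K) * X 0
                  + (n : MvPolynomial (Fin 1) K))) := by
      rw [Polynomial.comp_eq_aeval, Polynomial.aeval_map_algebraMap]
    rw [hcomp, Polynomial.natDegree_comp, Polynomial.natDegree_linear hmuM,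
      Polynomial.natDegree_map_eq_of_injective
        (by rw [MvPolynomial.algebraMap_eq]; exact C_injective (Fin 1) K), mul_one]
  -- divisibility dichotomy
  have hAne : F i ≠ 0 := hirrA.ne_zero
  have hprime : Prime (F i) := UniqueFactorizationMonoid.irreducible_iff_prime.mp hirrA
  have hdvd : F i ∣ v * F (j + ℓ * mu) := ⟨u, by rw [← heq]; ring⟩
  rcases hprime.2.2 _ _ hdvd with hcase | hcase
  · obtain ⟨c, rfl⟩ := hcase
    have hc : c ≠ 0 := fun h => hv (by rw [h, mul_zero])
    rw [degreeOf_one_mul _ _ hAne hc, hdegF] at hdv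
    omega
  · -- the two irreducibles are associated; push into K[X] and derive a contradiction
    have hassoc : Associated (F i) (F (j + ℓ * mu)) := hirrA.associated_of_dvd hirrB hcase
    obtain ⟨cu, hcu⟩ := hassoc
    -- the specialization x ↦ 0, y ↦ X
    set Φ : MvPolynomial (Fin 2) K →ₐ[K] Polynomial K :=
      MvPolynomial.aeval ![0, Polynomial.X] with hΦdef
    have hΦF : ∀ n : ℤ, Φ (F n)
        = P.comp (Polynomial.C ((mu : ℤ) : K) * Polynomial.X + Polynomial.C ((n : ℤ) : K)) := by
      intro n
      rw [hFdef]
      simp only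
      rw [← Polynomial.aeval_algHom_apply Φ _ P]
      have harg : Φ (lam • X 0 + mu • X 1 + n • (1 : MvPolynomial (Fin 2) K))
          = Polynomial.C ((mu : ℤ) : K) * Polynomial.X + Polynomial.C ((n : ℤ) : K) := by
        rw [hΦdef]
        simp only [zsmul_eq_mul, map_add, map_mul, map_intCast, map_one, aeval_X,
          Matrix.cons_val_zero, Matrix.cons_val_one, Matrix.head_cons]
        push_cast [Polynomial.C_eq_intCast]
        ring
      rw [harg, Polynomial.comp_eq_aeval]
    -- leading coefficients
    have hPne : P ≠ 0 := fun h => by simp [h] at hN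
    have hGdeg : ∀ n : ℤ,
        (Polynomial.C ((mu : ℤ) : K) * Polynomial.X + Polynomial.C ((n : ℤ) : K)).natDegree = 1 :=
      fun n => Polynomial.natDegree_linear hmuK
    have hlead : ∀ n : ℤ,
        (P.comp (Polynomial.C ((mu : ℤ) : K) * Polynomial.X
          + Polynomial.C ((n : ℤ) : K))).leadingCoeff
        = P.leadingCoeff * ((mu : ℤ) : K) ^ P.natDegree := by
      intro n
      rw [Polynomial.leadingCoeff_comp (by rw [hGdeg n]; exact one_ne_zero),
        Polynomial.leadingCoeff_linear hmuK]
    have hL : P.leadingCoeff * ((mu : ℤ) : K) ^ P.natDegree ≠ 0 :=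
      mul_ne_zero (Polynomial.leadingCoeff_ne_zero.mpr hPne) (pow_ne_zero _ hmuK)
    -- apply Φ to the associate relation
    have hΦeq : Φ (F i) * Φ (cu : MvPolynomial (Fin 2) K) = Φ (F (j + ℓ * mu)) := by
      rw [← map_mul, hcu]
    obtain ⟨r, hr, hCr⟩ := Polynomial.isUnit_iff.mp (cu.isUnit.map Φ)
    rw [← hCr, hΦF, hΦF] at hΦeq
    have hr1 : r = 1 := by
      have hlc := congrArg Polynomial.leadingCoeff hΦeq
      rw [Polynomial.leadingCoeff_mul, Polynomial.leadingCoeff_C, hlead, hlead] at hlc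
      exact mul_left_cancel₀ hL (hlc.trans (mul_one _).symm)
    rw [hr1, map_one, mul_one] at hΦeq
    -- deduce that P is shift-periodic
    set d : K := ((j + ℓ * mu - i : ℤ) : K) with hddef
    have hdne : d ≠ 0 := by
      rw [hddef]
      rw [Int.cast_ne_zero]
      intro h0
      have hdvd2 : mu ∣ i - j := ⟨ℓ, by rw [mul_comm]; linarith⟩
      have := Int.eq_zero_of_abs_lt_dvd hdvd2 (abs_lt.mpr ⟨by omega, by omega⟩)
      omega
    have hev : ∀ z : K, P.eval z = P.eval (z + d) := by
      intro z
      have hx0 := congrArg (Polynomial.eval ((z - ((i : ℤ) : K)) / ((mu : ℤ) : K))) hΦeq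
      rw [Polynomial.eval_comp, Polynomial.eval_comp] at hx0
      simp only [Polynomial.eval_add, Polynomial.eval_mul, Polynomial.eval_C,
        Polynomial.eval_X] at hx0
      have h1 : ((mu : ℤ) : K) * ((z - ((i : ℤ) : K)) / ((mu : ℤ) : K)) + ((i : ℤ) : K) = z := by
        field_simp
        ring
      have h2 : ((mu : ℤ) : K) * ((z - ((i : ℤ) : K)) / ((mu : ℤ) : K))
          + (((j + ℓ * mu : ℤ) : K)) = z + d := by
        rw [hddef]
        field_simp
        push_cast
        ring
      rw [h1, h2] at hx0
      exact hx0
    have hk : ∀ k : ℕ, P.eval ((k : K) * d) = P.eval 0 := by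
      intro k
      induction k with
      | zero => simp
      | succ k ihk =>
          have := (hev ((k : K) * d)).symm
          rw [show ((k + 1 : ℕ) : K) * d = (k : K) * d + d by push_cast; ring]
          rw [this, ihk]
    have hQroot : ∀ k : ℕ, (P - Polynomial.C (P.eval 0)).IsRoot ((k : K) * d) := by
      intro k
      simp [Polynomial.IsRoot, hk k]
    have hinj : Function.Injective (fun k : ℕ => (k : K) * d) :=
      fun a b hab => Nat.cast_injective (mul_right_cancel₀ hdne hab)
    have hinf : {x : K | (P - Polynomial.C (P.eval 0)).IsRoot x}.Infinite :=
      Set.infinite_of_injective_forall_mem hinj hQroot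
    have hQ0 : P - Polynomial.C (P.eval 0) = 0 :=
      Polynomial.eq_zero_of_infinite_isRoot _ hinf
    have hPC : P = Polynomial.C (P.eval 0) := by
      rwa [sub_eq_zero] at hQ0
    rw [hPC, Polynomial.natDegree_C] at hN
    omega
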